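/- Let G_0, G_1 be 1 × n matrices (row vectors) over a finite field F_q such that every entry of G_0 and every entry of G_1 is nonzero. Then for every nonzero polynomial u(z) ∈ F_q[z], the polynomial codeword v(z) = u(z)·(G_0 + G_1 z) (a vector of n polynomials) has total Hamming weight at least 2n, where the weight of a vector of polynomials is the sum over all coefficients of the number of nonzero entries. -/
import Mathlib


theorem stmt2 {F : Type*} [Field F] [Fintype F] {n : ℕ} (hn : 2 ≤ n)
    (G0 G1 : Fin n → F) (h0 : ∀ j, G0 j ≠ 0) (h1 : ∀ j, G1 j ≠ 0)
    (u : Polynomial F) (hu : u ≠ 0) :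
    2 * n ≤ ∑ j : Fin n,
      (u * (Polynomial.C (G0 j) + Polynomial.C (G1 j) * Polynomial.X)).support.card := by
  have key : ∀ j : Fin n, 2 ≤
      (u * (Polynomial.C (G0 j) + Polynomial.C (G1 j) * Polynomial.X)).support.card := by
    intro j
    set q : Polynomial F := Polynomial.C (G0 j) + Polynomial.C (G1 j) * Polynomial.X with hq
    have hq0 : q ≠ 0 := by
      intro h
      have : q.coeff 0 = 0 := by rw [h]; simp
      simp [hq] at this
      exact h0 j this
    have hp0 : u * q ≠ 0 := mul_ne_zero hu hq0
    have hdq : q.natDegree = 1 := by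
      rw [hq]
      compute_degree!
      exact h1 j
    have htq : q.natTrailingDegree = 0 := by
      apply Polynomial.natTrailingDegree_eq_zero_of_constantCoeff_ne_zero
      simp [hq, Polynomial.constantCoeff_apply, h0 j]
    have hd : (u * q).natDegree = u.natDegree + 1 := by
      rw [Polynomial.natDegree_mul hu hq0, hdq]
    have ht : (u * q).natTrailingDegree = u.natTrailingDegree := by
      rw [Polynomial.natTrailingDegree_mul hu hq0, htq, add_zero]
    have hlt : (u * q).natTrailingDegree < (u * q).natDegree := by
      rw [hd, ht]
      exact lt_of_le_of_lt u.natTrailingDegree_le_natDegree (Nat.lt_succ_self _)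
    have h1m : (u * q).natTrailingDegree ∈ (u * q).support :=
      Polynomial.natTrailingDegree_mem_support_of_nonzero hp0
    have h2m : (u * q).natDegree ∈ (u * q).support :=
      Polynomial.natDegree_mem_support_of_nonzero hp0
    exact Finset.one_lt_card.mpr ⟨_, h1m, _, h2m, hlt.ne⟩
  calc 2 * n = ∑ _j : Fin n, 2 := by simp [mul_comm]
    _ ≤ _ := Finset.sum_le_sum fun j _ => key j
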